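/- Consider a reversible reaction graph on c vertices: a finite edge set E with tail and head maps t, h : E → Fin c satisfying t e ≠ h e, and strictly positive constants k⁺, k⁻ : E → ℝ, with Laplacian L defined by L i j = −(∑_{e : t e = j ∧ h e = i} k⁺ e + ∑_{e : t e = i ∧ h e = j} k⁻ e) for i ≠ j and L j j = ∑_{e : t e = j} k⁺ e + ∑_{e : h e = j} k⁻ e. If x : Fin c → ℝ satisfies Real.log (k⁺ e) − Real.log (k⁻ e) = x (h e) − x (t e) for every edge e, then the matrix L * Matrix.diagonal (fun i => Real.exp (x i)) is symmetric and L *ᵥ (fun i => Real.exp (x i)) = 0. -/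
import Mathlib


open Matrix

/-- The weighted Laplacian matrix of a reversible reaction graph on `c` vertices,
with edge set `E`, tail and head maps `t, h`, and forward and reverse reaction
constants `kp, km`. -/
def reactionLaplacian (c : ℕ) {E : Type*} [Fintype E]
    (t h : E → Fin c) (kp km : E → ℝ) : Matrix (Fin c) (Fin c) ℝ :=
  fun i j =>
    if i = j then
      (∑ e ∈ Finset.univ.filter (fun e => t e = j), kp e) +
        (∑ e ∈ Finset.univ.filter (fun e => h e = j), km e)
    else
      -((∑ e ∈ Finset.univ.filter (fun e => t e = j ∧ h e = i), kp e) +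
        (∑ e ∈ Finset.univ.filter (fun e => t e = i ∧ h e = j), km e))

theorem detailed_balanced_potential_gives_symmetric_and_balanced
    (c : ℕ) (hc : 0 < c) (E : Type*) [Fintype E]
    (t h : E → Fin c) (hth : ∀ e, t e ≠ h e)
    (kp km : E → ℝ) (hkp : ∀ e, 0 < kp e) (hkm : ∀ e, 0 < km e)
    (x : Fin c → ℝ)
    (hx : ∀ e, Real.log (kp e) - Real.log (km e) = x (h e) - x (t e)) :
    (reactionLaplacian c t h kp km *
        Matrix.diagonal (fun i => Real.exp (x i))).IsSymm ∧
      reactionLaplacian c t h kp km *ᵥ (fun i => Real.exp (x i)) = 0 := by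
  set L := reactionLaplacian c t h kp km with hLdef
  set v : Fin c → ℝ := fun i => Real.exp (x i) with hv
  have hkey : ∀ e, kp e * Real.exp (x (t e)) = km e * Real.exp (x (h e)) := by
    intro e
    have h1 : Real.log (kp e) + x (t e) = Real.log (km e) + x (h e) := by
      have := hx e; linarith
    have h2 := congrArg Real.exp h1
    rwa [Real.exp_add, Real.exp_add, Real.exp_log (hkp e), Real.exp_log (hkm e)] at h2
  have hsym : (L * Matrix.diagonal v).IsSymm := by
    rw [Matrix.IsSymm]
    ext i j
    simp only [Matrix.transpose_apply, Matrix.mul_diagonal]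
    rcases eq_or_ne i j with rfl | hij
    · rfl
    · simp only [hLdef, reactionLaplacian, if_neg hij, if_neg (Ne.symm hij)]
      rw [neg_mul, neg_mul, add_mul, add_mul, Finset.sum_mul, Finset.sum_mul,
        Finset.sum_mul, Finset.sum_mul, neg_inj, add_comm]
      congr 1
      · apply Finset.sum_congr rfl
        intro e he
        simp only [Finset.mem_filter] at he
        have := hkey e
        rw [he.2.1, he.2.2] at this
        simpa [hv] using this.symm
      · apply Finset.sum_congr rfl
        intro e he
        simp only [Finset.mem_filter] at he
        have := hkey e
        rw [he.2.1, he.2.2] at this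
        simpa [hv] using this
  have hcol : ∀ i, ∑ j, L j i = 0 := by
    intro i
    have hA : (∑ e ∈ Finset.univ.filter (fun e => t e = i ∧ h e = i), kp e) = 0 := by
      apply Finset.sum_eq_zero
      intro e he
      simp only [Finset.mem_filter] at he
      exact absurd (he.2.1.trans he.2.2.symm) (hth e)
    have hB : (∑ e ∈ Finset.univ.filter (fun e => t e = i ∧ h e = i), km e) = 0 := by
      apply Finset.sum_eq_zero
      intro e he
      simp only [Finset.mem_filter] at he
      exact absurd (he.2.1.trans he.2.2.symm) (hth e)
    have h1 : ∑ j : Fin c, ∑ e ∈ Finset.univ.filter (fun e => t e = i ∧ h e = j), kp e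
        = ∑ e ∈ Finset.univ.filter (fun e => t e = i), kp e := by
      have := Finset.sum_fiberwise (Finset.univ.filter (fun e => t e = i)) h kp
      simpa [Finset.filter_filter] using this
    have h2 : ∑ j : Fin c, ∑ e ∈ Finset.univ.filter (fun e => t e = j ∧ h e = i), km e
        = ∑ e ∈ Finset.univ.filter (fun e => h e = i), km e := by
      have := Finset.sum_fiberwise (Finset.univ.filter (fun e => h e = i)) t km
      simpa [Finset.filter_filter, and_comm] using this
    have hLentry : ∀ j : Fin c, L j i =
        (if j = i then (∑ e ∈ Finset.univ.filter (fun e => t e = i), kp e) +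
            (∑ e ∈ Finset.univ.filter (fun e => h e = i), km e) else 0)
        - ((∑ e ∈ Finset.univ.filter (fun e => t e = i ∧ h e = j), kp e) +
           (∑ e ∈ Finset.univ.filter (fun e => t e = j ∧ h e = i), km e)) := by
      intro j
      by_cases hji : j = i
      · subst hji
        simp [hLdef, reactionLaplacian, hA, hB]
      · simp [hLdef, reactionLaplacian, hji]
    rw [Finset.sum_congr rfl (fun j _ => hLentry j), Finset.sum_sub_distrib,
      Finset.sum_add_distrib, h1, h2]
    simp
  refine ⟨hsym, ?_⟩
  funext i
  have hrow : ∀ j, L i j * v j = L j i * v i := by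
    intro j
    have := congrFun (congrFun hsym i) j
    simpa [Matrix.transpose_apply, Matrix.mul_diagonal] using this.symm
  have : (L *ᵥ v) i = ∑ j, L i j * v j := rfl
  rw [this]
  calc ∑ j, L i j * v j = ∑ j, L j i * v i := by
        exact Finset.sum_congr rfl fun j _ => hrow j
    _ = (∑ j, L j i) * v i := by rw [Finset.sum_mul]
    _ = 0 := by rw [hcol i, zero_mul]
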